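/- Let Λ be a finite measure on [0,1] with ∫_{[0,1]} p^{−1} Λ(dp) < ∞, let f(y) := ∫_{[0,1]} (1 − (1−p)^{e^y}) e^{−y} p^{−2} Λ(dp), and let 0 ≤ c < ∞. If √(log(1/r)) · ∫_{[0,r]} p^{−1} Λ(dp) → c as r → 0, then √y · f(y) → c as y → ∞. -/

import Mathlib

open MeasureTheory Filter Set

open Topology
open scoped ENNReal

/-! ### Auxiliary pointwise bounds -/

lemma gaux_nonneg {t p : ℝ} (ht : 0 < t) (hp : 0 ≤ p) (hp1 : p ≤ 1) :
    0 ≤ (1 - (1 - p) ^ t) / t / p ^ 2 := by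
  apply div_nonneg (div_nonneg ?_ ht.le) (sq_nonneg p)
  have := Real.rpow_le_one (x := 1 - p) (by linarith) (by linarith) ht.le
  linarith

lemma gaux_upper {t p : ℝ} (ht : 1 ≤ t) (hp : 0 < p) (hp1 : p ≤ 1) :
    (1 - (1 - p) ^ t) / t / p ^ 2 ≤ p⁻¹ * min 1 (t * p)⁻¹ := by
  have ht0 : 0 < t := lt_of_lt_of_le one_pos ht
  have h1 : 1 - t * p ≤ (1 - p) ^ t := by
    have := one_add_mul_self_le_rpow_one_add (s := -p) (by linarith) ht
    rw [show (1 : ℝ) + -p = 1 - p by ring] at this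
    linarith
  have h2 : 0 ≤ (1 - p) ^ t := Real.rpow_nonneg (by linarith) t
  have h3 : (1 - p) ^ t ≤ 1 := Real.rpow_le_one (by linarith) (by linarith) ht0.le
  rw [div_div]
  rcases le_total 1 (t * p) with hcase | hcase
  · have hm : min 1 (t*p)⁻¹ = (t*p)⁻¹ := min_eq_right (by
      rw [inv_le_one_iff₀]; right; exact hcase)
    rw [hm, div_le_iff₀ (by positivity)]
    have hexp : p⁻¹ * (t * p)⁻¹ * (t * p ^ 2) = 1 := by field_simp
    rw [hexp]; linarith
  · have hm : min 1 (t*p)⁻¹ = 1 := min_eq_left (one_le_inv_iff₀.2 ⟨by positivity, hcase⟩)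
    rw [hm, mul_one, div_le_iff₀ (by positivity)]
    have hexp : p⁻¹ * (t * p ^ 2) = t * p := by field_simp
    rw [hexp]; linarith

lemma gaux_lower {t p δ : ℝ} (ht : 0 < t) (hp : 0 < p) (hp1 : p ≤ 1) (hδ : 0 < δ)
    (hpt : t * p ≤ δ) :
    (1 + δ)⁻¹ * p⁻¹ ≤ (1 - (1 - p) ^ t) / t / p ^ 2 := by
  have hexp : (1 - p) ^ t ≤ Real.exp (-(t * p)) := by
    rcases eq_or_lt_of_le hp1 with rfl | hlt
    · simp only [sub_self]
      rw [Real.zero_rpow ht.ne']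
      positivity
    · rw [Real.rpow_def_of_pos (by linarith)]
      apply Real.exp_le_exp.2
      have hlog : Real.log (1 - p) ≤ -p := by
        have := Real.log_le_sub_one_of_pos (x := 1 - p) (by linarith)
        linarith
      nlinarith [hlog, ht.le]
  have hexp2 : Real.exp (-(t*p)) ≤ (1 + t*p)⁻¹ := by
    rw [Real.exp_neg]
    exact inv_anti₀ (by positivity) (by linarith [Real.add_one_le_exp (t*p)])
  have key : (1 + t*p)⁻¹ * p⁻¹ ≤ (1 - (1 - p) ^ t) / t / p ^ 2 := by
    rw [div_div, le_div_iff₀ (by positivity)]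
    have h1 : (1 + t*p)⁻¹ * p⁻¹ * (t * p ^ 2) = 1 - (1+t*p)⁻¹ := by
      rw [eq_sub_iff_add_eq]
      field_simp
      ring
    rw [h1]
    linarith
  refine le_trans ?_ key
  have : (1 + δ)⁻¹ ≤ (1 + t*p)⁻¹ := inv_anti₀ (by positivity) (by linarith)
  apply mul_le_mul_of_nonneg_right this (by positivity)

lemma gaux_meas {t : ℝ} (ht : 0 ≤ t) :
    Measurable (fun p : ℝ => (1 - (1 - p) ^ t) / t / p ^ 2) := by
  apply Measurable.div
  · apply Measurable.div_const
    apply measurable_const.sub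
    exact ((continuous_const.sub continuous_id).rpow_const (fun x => Or.inr ht)).measurable
  · exact measurable_id.pow_const 2

/-! ### Tendsto helpers -/

lemma taux_ratio (b : ℝ) : Tendsto (fun y : ℝ => y / (y + b)) atTop (𝓝 1) := by
  have h0 : Tendsto (fun y : ℝ => b / (y + b)) atTop (𝓝 0) :=
    tendsto_const_nhds.div_atTop (tendsto_atTop_add_const_right _ b tendsto_id)
  have := (tendsto_const_nhds (x := (1:ℝ))).sub h0
  rw [sub_zero] at this
  apply this.congr'
  filter_upwards [eventually_gt_atTop (max 0 (-b))] with y hy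
  have hyb : 0 < y + b := by
    have := lt_of_le_of_lt (le_max_right 0 (-b)) hy; linarith
  field_simp
  ring

lemma taux_sqrt_ratio (b : ℝ) :
    Tendsto (fun y : ℝ => Real.sqrt y / Real.sqrt (y + b)) atTop (𝓝 1) := by
  have h1 : Tendsto (fun y : ℝ => Real.sqrt (y / (y + b))) atTop (𝓝 1) := by
    have := (Real.continuous_sqrt.tendsto 1).comp (taux_ratio b)
    simpa [Function.comp_def] using this
  apply h1.congr'
  filter_upwards [eventually_ge_atTop (0:ℝ)] with y hy
  rw [Real.sqrt_div hy]

lemma taux_sqrt_exp : Tendsto (fun y : ℝ => Real.sqrt y * Real.exp (-(y/2))) atTop (𝓝 0) := by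
  have h1 : Tendsto (fun y : ℝ => 2 * ((y/2) ^ 1 * Real.exp (-(y/2)))) atTop (𝓝 0) := by
    have := ((Real.tendsto_pow_mul_exp_neg_atTop_nhds_zero 1).comp
      (tendsto_id.atTop_div_const two_pos)).const_mul 2
    simpa using this
  apply squeeze_zero' (Eventually.of_forall fun y => by positivity) ?_ h1
  filter_upwards [eventually_ge_atTop (1:ℝ)] with y hy
  have h3 : 1 ≤ Real.sqrt y := by
    rw [show (1:ℝ) = Real.sqrt 1 by simp]
    exact Real.sqrt_le_sqrt hy
  have h2 : Real.sqrt y ≤ y := by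
    nlinarith [Real.sq_sqrt (by linarith : (0:ℝ) ≤ y)]
  calc Real.sqrt y * Real.exp (-(y/2)) ≤ y * Real.exp (-(y/2)) :=
        mul_le_mul_of_nonneg_right h2 (Real.exp_nonneg _)
    _ = 2 * ((y/2) ^ 1 * Real.exp (-(y/2))) := by ring

/-! ### Measure-theoretic auxiliaries -/

noncomputable def Naux (Λ : Measure ℝ) (r : ℝ) : ℝ≥0∞ :=
  ∫⁻ p in Icc (0:ℝ) r, (ENNReal.ofReal p)⁻¹ ∂Λ

noncomputable def Laux (Λ : Measure ℝ) (y : ℝ) : ℝ≥0∞ :=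
  ∫⁻ p in Ioc (0:ℝ) 1, ENNReal.ofReal ((1 - (1 - p) ^ Real.exp y) / Real.exp y / p ^ 2) ∂Λ

lemma laux_zero (Λ : Measure ℝ)
    (hdust : (∫⁻ p in Icc (0 : ℝ) 1, (ENNReal.ofReal p)⁻¹ ∂Λ) < ⊤) : Λ {0} = 0 := by
  by_contra hne
  have hsub : ({(0:ℝ)} : Set ℝ) ⊆ Icc 0 1 := by simp
  have h1 : (∫⁻ p in {(0:ℝ)}, (ENNReal.ofReal p)⁻¹ ∂Λ) ≤
      ∫⁻ p in Icc (0 : ℝ) 1, (ENNReal.ofReal p)⁻¹ ∂Λ := lintegral_mono_set hsub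
  rw [lintegral_singleton] at h1
  simp only [ENNReal.ofReal_zero, ENNReal.inv_zero] at h1
  rw [ENNReal.top_mul hne] at h1
  exact absurd (lt_of_le_of_lt h1 hdust) (lt_irrefl _)

lemma laux_restrict (Λ : Measure ℝ) (hΛ0 : Λ {0} = 0) {r : ℝ} (hr : 0 ≤ r) :
    Λ.restrict (Icc 0 r) = Λ.restrict (Ioc 0 r) := by
  apply Measure.restrict_congr_set
  apply measure_symmDiff_eq_zero_iff.1
  apply measure_mono_null _ hΛ0
  rw [symmDiff_def]
  apply union_subset
  · rintro x ⟨⟨h1, h2⟩, h3⟩; exact le_antisymm (not_lt.1 fun h => h3 ⟨h, h2⟩) h1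
  · rw [diff_eq_empty.2 Ioc_subset_Icc_self]
    exact empty_subset _

lemma laux_Nmono (Λ : Measure ℝ) {u v : ℝ} (huv : u ≤ v) : Naux Λ u ≤ Naux Λ v :=
  lintegral_mono_set (Icc_subset_Icc_right huv)

lemma laux_NIoc (Λ : Measure ℝ) (hΛ0 : Λ {0} = 0) {r : ℝ} (hr : 0 ≤ r) :
    (∫⁻ p in Ioc (0:ℝ) r, (ENNReal.ofReal p)⁻¹ ∂Λ) = Naux Λ r := by
  rw [Naux, laux_restrict Λ hΛ0 hr]

lemma laux_f_eq (Λ : Measure ℝ) (hΛ0 : Λ {0} = 0) (y : ℝ) :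
    ∫ p in Icc (0:ℝ) 1, (1 - (1 - p) ^ Real.exp y) / Real.exp y / p ^ 2 ∂Λ
      = (Laux Λ y).toReal := by
  rw [Laux, ← laux_restrict Λ hΛ0 zero_le_one]
  rw [laux_restrict Λ hΛ0 zero_le_one]
  exact integral_eq_lintegral_of_nonneg_ae
    ((ae_restrict_iff' measurableSet_Ioc).2 (Eventually.of_forall fun p hp =>
      gaux_nonneg (Real.exp_pos y) hp.1.le hp.2))
    ((gaux_meas (Real.exp_pos y).le).aestronglyMeasurable)

lemma laux_L_le (Λ : Measure ℝ) (hΛ0 : Λ {0} = 0) {y : ℝ} (hy : 0 ≤ y) :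
    Laux Λ y ≤ Naux Λ 1 := by
  rw [← laux_NIoc Λ hΛ0 zero_le_one]
  apply setLIntegral_mono (ENNReal.measurable_ofReal.inv)
  intro p hp
  have h1 := gaux_upper (Real.one_le_exp hy) hp.1 hp.2
  have h2 : p⁻¹ * min 1 (Real.exp y * p)⁻¹ ≤ p⁻¹ :=
    (mul_le_of_le_one_right (inv_nonneg.2 hp.1.le) (min_le_left _ _))
  rw [Pi.inv_apply, ← ENNReal.ofReal_inv_of_pos hp.1]
  exact ENNReal.ofReal_le_ofReal (h1.trans h2)

lemma laux_lower (Λ : Measure ℝ) {y δ : ℝ} (hy : 0 ≤ y) (hδ : 0 < δ)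
    (hr1 : δ / Real.exp y ≤ 1) :
    ENNReal.ofReal ((1 + δ)⁻¹) *
      (∫⁻ p in Ioc (0:ℝ) (δ / Real.exp y), (ENNReal.ofReal p)⁻¹ ∂Λ) ≤ Laux Λ y := by
  set t := Real.exp y with htdef
  have ht0 : 0 < t := Real.exp_pos y
  have step1 : ENNReal.ofReal ((1 + δ)⁻¹) * (∫⁻ p in Ioc (0:ℝ) (δ/t), (ENNReal.ofReal p)⁻¹ ∂Λ)
      = ∫⁻ p in Ioc (0:ℝ) (δ/t), ENNReal.ofReal ((1 + δ)⁻¹) * (ENNReal.ofReal p)⁻¹ ∂Λ :=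
    (lintegral_const_mul _ (ENNReal.measurable_ofReal.inv)).symm
  rw [step1, Laux]
  refine le_trans (setLIntegral_mono (gaux_meas ht0.le |>.ennreal_ofReal) ?_)
    (lintegral_mono_set (Ioc_subset_Ioc_right hr1))
  intro p hp
  have hp0 := hp.1
  have hple : p ≤ 1 := hp.2.trans hr1
  have hbd := gaux_lower ht0 hp0 hple hδ (by
    rw [mul_comm, ← le_div_iff₀ ht0]
    exact hp.2)
  calc ENNReal.ofReal ((1 + δ)⁻¹) * (ENNReal.ofReal p)⁻¹
      = ENNReal.ofReal ((1 + δ)⁻¹ * p⁻¹) := by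
        rw [ENNReal.ofReal_mul (by positivity), ENNReal.ofReal_inv_of_pos hp0]
    _ ≤ _ := ENNReal.ofReal_le_ofReal hbd

lemma laux_tonelli (Λ : Measure ℝ) [IsFiniteMeasure Λ] {t : ℝ} (ht : 1 ≤ t) :
    (∫⁻ p in Ioc (0:ℝ) 1, ENNReal.ofReal ((1 - (1 - p) ^ t) / t / p ^ 2) ∂Λ)
    ≤ ∫⁻ s in Ioo (0:ℝ) 1, Naux Λ (min 1 (t*s)⁻¹) ∂volume := by
  have ht0 : 0 < t := lt_of_lt_of_le one_pos ht
  set F : ℝ → ℝ → ℝ≥0∞ := fun p s =>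
    ({q : ℝ × ℝ | t * q.1 * q.2 < 1}).indicator (fun q => (ENNReal.ofReal q.1)⁻¹) (p, s)
    with hFdef
  have hS : MeasurableSet {q : ℝ × ℝ | t * q.1 * q.2 < 1} :=
    measurableSet_lt ((measurable_const.mul measurable_fst).mul measurable_snd)
      measurable_const
  have hFm : Measurable (Function.uncurry F) := by
    have : Function.uncurry F =
        ({q : ℝ × ℝ | t * q.1 * q.2 < 1}).indicator (fun q => (ENNReal.ofReal q.1)⁻¹) := rfl
    rw [this]
    exact (measurable_fst.ennreal_ofReal.inv).indicator hS
  have step1 : ∀ p ∈ Ioc (0:ℝ) 1,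
      ENNReal.ofReal ((1 - (1 - p) ^ t) / t / p ^ 2)
        ≤ ∫⁻ s in Ioo (0:ℝ) 1, F p s ∂volume := by
    intro p hp
    have hSp : MeasurableSet {s : ℝ | t * p * s < 1} :=
      measurableSet_lt (measurable_const.mul measurable_id) measurable_const
    have hFp : (fun s => F p s) =
        ({s : ℝ | t * p * s < 1}).indicator (fun _ => (ENNReal.ofReal p)⁻¹) := rfl
    have hset : {s : ℝ | t * p * s < 1} = Iio ((t*p)⁻¹) := by
      ext s
      rw [mem_setOf_eq, mem_Iio, show t*p*s = s*(t*p) by ring,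
        ← lt_div_iff₀ (mul_pos ht0 hp.1), one_div]
    have hinter : Iio ((t*p)⁻¹) ∩ Ioo (0:ℝ) 1 = Ioo 0 (min ((t*p)⁻¹) 1) := by
      ext x
      simp only [mem_inter_iff, mem_Iio, mem_Ioo, lt_min_iff]
      tauto
    rw [hFp, lintegral_indicator hSp, Measure.restrict_restrict hSp, hset, hinter,
      setLIntegral_const, Real.volume_Ioo, sub_zero]
    have hbd := gaux_upper ht hp.1 hp.2
    calc ENNReal.ofReal ((1 - (1 - p) ^ t) / t / p ^ 2)
        ≤ ENNReal.ofReal (p⁻¹ * min 1 (t*p)⁻¹) := ENNReal.ofReal_le_ofReal hbd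
      _ = (ENNReal.ofReal p)⁻¹ * ENNReal.ofReal (min ((t*p)⁻¹) 1) := by
          rw [ENNReal.ofReal_mul (inv_nonneg.2 hp.1.le), ENNReal.ofReal_inv_of_pos hp.1,
            min_comm]
  calc (∫⁻ p in Ioc (0:ℝ) 1, ENNReal.ofReal ((1 - (1 - p) ^ t) / t / p ^ 2) ∂Λ)
      ≤ ∫⁻ p in Ioc (0:ℝ) 1, (∫⁻ s in Ioo (0:ℝ) 1, F p s ∂volume) ∂Λ := by
        apply lintegral_mono_ae
        exact (ae_restrict_iff' measurableSet_Ioc).2 (Eventually.of_forall step1)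
    _ = ∫⁻ s in Ioo (0:ℝ) 1, (∫⁻ p in Ioc (0:ℝ) 1, F p s ∂Λ) ∂volume :=
        lintegral_lintegral_swap hFm.aemeasurable
    _ ≤ _ := by
        apply lintegral_mono_ae
        refine (ae_restrict_iff' measurableSet_Ioo).2 (Eventually.of_forall ?_)
        intro s hs
        have hSs : MeasurableSet {p : ℝ | t * p * s < 1} :=
          measurableSet_lt ((measurable_const.mul measurable_id).mul measurable_const)
            measurable_const
        have hFs : (fun p => F p s) =
            ({p : ℝ | t * p * s < 1}).indicator (fun p => (ENNReal.ofReal p)⁻¹) := rfl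
        rw [hFs, lintegral_indicator hSs, Measure.restrict_restrict hSs]
        apply lintegral_mono_set
        intro p hp
        obtain ⟨hp1, hp2⟩ := hp
        rw [mem_setOf_eq] at hp1
        constructor
        · exact hp2.1.le
        · refine le_min hp2.2 ?_
          rw [← one_div, le_div_iff₀ (mul_pos ht0 hs.1)]
          nlinarith

lemma laux_split (Λ : Measure ℝ) {t α δ : ℝ} (ht : 0 < t) (hα : 0 < α) (hαδ : α ≤ δ)
    (hδ1 : δ ≤ 1) :
    (∫⁻ s in Ioo (0:ℝ) 1, Naux Λ (min 1 (t*s)⁻¹) ∂volume)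
      ≤ Naux Λ 1 * ENNReal.ofReal α + Naux Λ ((t*α)⁻¹) * ENNReal.ofReal δ
        + Naux Λ ((t*δ)⁻¹) := by
  have hcover : Ioo (0:ℝ) 1 ⊆ Ioo 0 α ∪ (Ico α δ ∪ Ico δ 1) := by
    intro s hs
    rcases lt_or_ge s α with h1 | h1
    · exact Or.inl ⟨hs.1, h1⟩
    · rcases lt_or_ge s δ with h2 | h2
      · exact Or.inr (Or.inl ⟨h1, h2⟩)
      · exact Or.inr (Or.inr ⟨h2, hs.2⟩)
  refine le_trans (lintegral_mono_set hcover) ?_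
  refine le_trans (lintegral_union_le _ _ _) ?_
  rw [add_assoc]
  refine add_le_add ?_ (le_trans (lintegral_union_le _ _ _) (add_le_add ?_ ?_))
  · -- low region
    refine le_trans (lintegral_mono fun s => laux_Nmono Λ (min_le_left _ _)) ?_
    rw [setLIntegral_const, Real.volume_Ioo, sub_zero]
  · -- middle region
    have hbd : ∀ s ∈ Ico α δ, Naux Λ (min 1 (t*s)⁻¹) ≤ Naux Λ ((t*α)⁻¹) := by
      intro s hs
      refine laux_Nmono Λ (le_trans (min_le_right _ _) ?_)
      exact inv_anti₀ (mul_pos ht hα) (mul_le_mul_of_nonneg_left hs.1 ht.le)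
    refine le_trans (lintegral_mono_ae ((ae_restrict_iff' measurableSet_Ico).2
      (Eventually.of_forall hbd))) ?_
    rw [setLIntegral_const, Real.volume_Ico]
    exact mul_le_mul_right (ENNReal.ofReal_le_ofReal (by linarith)) _
  · -- high region
    have hbd : ∀ s ∈ Ico δ 1, Naux Λ (min 1 (t*s)⁻¹) ≤ Naux Λ ((t*δ)⁻¹) := by
      intro s hs
      refine laux_Nmono Λ (le_trans (min_le_right _ _) ?_)
      exact inv_anti₀ (mul_pos ht (lt_of_lt_of_le hα hαδ)) (mul_le_mul_of_nonneg_left hs.1 ht.le)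
    refine le_trans (lintegral_mono_ae ((ae_restrict_iff' measurableSet_Ico).2
      (Eventually.of_forall hbd))) ?_
    rw [setLIntegral_const, Real.volume_Ico]
    calc Naux Λ ((t*δ)⁻¹) * ENNReal.ofReal (1 - δ)
        ≤ Naux Λ ((t*δ)⁻¹) * 1 := by
          exact mul_le_mul_right (by
            rw [show (1:ℝ≥0∞) = ENNReal.ofReal 1 by simp]
            exact ENNReal.ofReal_le_ofReal (by linarith)) _
      _ = Naux Λ ((t*δ)⁻¹) := mul_one _


/-- Let `Λ` be a finite measure on `[0,1]` with `∫_{[0,1]} p⁻¹ Λ(dp) < ∞`, let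
`f y := ∫_{[0,1]} (1 - (1-p)^(e^y)) e^{-y} p⁻² Λ(dp)`, and let `0 ≤ c < ∞`.  If
`√(log(1/r)) ∫_{[0,r]} p⁻¹ Λ(dp) → c` as `r → 0` (from the right), then
`√y · f y → c` as `y → ∞`. -/
theorem f_asymptotics_of_dust_asymptotics
    (Λ : Measure ℝ) [IsFiniteMeasure Λ] (hsupp : Λ (Icc (0 : ℝ) 1)ᶜ = 0)
    (hdust : (∫⁻ p in Icc (0 : ℝ) 1, (ENNReal.ofReal p)⁻¹ ∂Λ) < ⊤)
    (f : ℝ → ℝ)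
    (hf : ∀ y : ℝ,
      f y = ∫ p in Icc (0 : ℝ) 1, (1 - (1 - p) ^ Real.exp y) / Real.exp y / p ^ 2 ∂Λ)
    (c : ℝ) (hc : 0 ≤ c)
    (h : Tendsto
      (fun r : ℝ =>
        Real.sqrt (Real.log (1 / r)) *
          (∫⁻ p in Icc (0 : ℝ) r, (ENNReal.ofReal p)⁻¹ ∂Λ).toReal)
      (nhdsWithin 0 (Ioi 0)) (nhds c)) :
    Tendsto (fun y : ℝ => Real.sqrt y * f y) atTop (nhds c) := by
  have hΛ0 : Λ {0} = 0 := laux_zero Λ hdust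
  have hN1 : Naux Λ 1 ≠ ⊤ := hdust.ne
  have hNfin : ∀ {r : ℝ}, r ≤ 1 → Naux Λ r ≠ ⊤ :=
    fun hr => ne_top_of_le_ne_top hN1 (laux_Nmono Λ hr)
  have hLfin : ∀ {y : ℝ}, 0 ≤ y → Laux Λ y ≠ ⊤ :=
    fun hy => ne_top_of_le_ne_top hN1 (laux_L_le Λ hΛ0 hy)
  have hfy : ∀ y : ℝ, f y = (Laux Λ y).toReal := fun y => by
    rw [hf y]; exact laux_f_eq Λ hΛ0 y
  have hH : Tendsto (fun r : ℝ => Real.sqrt (Real.log (1/r)) * (Naux Λ r).toReal)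
      (𝓝[>] (0:ℝ)) (𝓝 c) := h
  rw [tendsto_order]
  constructor
  · -- lower bound
    intro a ha
    rcases lt_or_ge a 0 with ha0 | ha0
    · filter_upwards [eventually_ge_atTop (0:ℝ)] with y hy
      have h1 : 0 ≤ Real.sqrt y * f y := by
        rw [hfy y]
        exact mul_nonneg (Real.sqrt_nonneg y) ENNReal.toReal_nonneg
      linarith
    · have hcpos : 0 < c := lt_of_le_of_lt ha0 ha
      set δ : ℝ := min 1 ((c - a)/(2*(a+1))) with hδdef
      have hδpos : 0 < δ := lt_min one_pos (div_pos (by linarith) (by linarith))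
      have hδ1 : δ ≤ 1 := min_le_left _ _
      have hδle : δ ≤ (c - a)/(2*(a+1)) := min_le_right _ _
      have hgoal_lt : a < (1+δ)⁻¹ * (1 * c) := by
        have h6 : δ * (2*(a+1)) ≤ c - a := (le_div_iff₀ (by linarith)).1 hδle
        have h5 : a * δ < 2*(a+1)*δ := mul_lt_mul_of_pos_right (by linarith) hδpos
        rw [one_mul, inv_mul_eq_div, lt_div_iff₀ (by linarith)]
        nlinarith
      have hrmap : Tendsto (fun y : ℝ => δ * Real.exp (-y)) atTop (𝓝[>] (0:ℝ)) := by
        refine tendsto_nhdsWithin_iff.2 ⟨?_, Eventually.of_forall fun y =>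
          mem_Ioi.2 (mul_pos hδpos (Real.exp_pos _))⟩
        have := Real.tendsto_exp_neg_atTop_nhds_zero.const_mul δ
        simpa using this
      have hcomp := hH.comp hrmap
      have hratio := taux_sqrt_ratio (-(Real.log δ))
      have hmain := (tendsto_const_nhds (x := (1+δ)⁻¹)).mul (hratio.mul hcomp)
      have hev1 := hmain.eventually_const_lt hgoal_lt
      filter_upwards [hev1, eventually_gt_atTop (0:ℝ)] with y hy1 hy0
      refine lt_of_lt_of_le hy1 ?_
      simp only [Function.comp_apply] at *
      set r : ℝ := δ * Real.exp (-y) with hrdef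
      have hr0 : 0 < r := mul_pos hδpos (Real.exp_pos _)
      have hlogδ : Real.log δ ≤ 0 := Real.log_nonpos hδpos.le hδ1
      have hs0 : 0 < y + -(Real.log δ) := by linarith
      have hsq : 0 < Real.sqrt (y + -(Real.log δ)) := Real.sqrt_pos.2 hs0
      have hlogr : Real.log (1/r) = y + -(Real.log δ) := by
        rw [one_div, Real.log_inv, hrdef, Real.log_mul hδpos.ne' (Real.exp_ne_zero _),
          Real.log_exp]
        ring
      -- identity
      have hid : (1+δ)⁻¹ * (Real.sqrt y / Real.sqrt (y + -(Real.log δ)) *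
            (Real.sqrt (Real.log (1/r)) * (Naux Λ r).toReal))
          = Real.sqrt y * ((1+δ)⁻¹ * (Naux Λ r).toReal) := by
        rw [hlogr]
        field_simp
      rw [hid]
      -- the inequality
      have hr1 : δ / Real.exp y ≤ 1 := by
        rw [div_le_one (Real.exp_pos y)]
        have : (1:ℝ) ≤ Real.exp y := Real.one_le_exp hy0.le
        linarith
      have hle := laux_lower Λ hy0.le hδpos hr1
      have hreq : δ / Real.exp y = r := by rw [hrdef, Real.exp_neg]; ring
      rw [hreq, laux_NIoc Λ hΛ0 hr0.le] at hle
      have h2 : ((ENNReal.ofReal ((1+δ)⁻¹)) * Naux Λ r).toReal ≤ (Laux Λ y).toReal :=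
        ENNReal.toReal_mono (hLfin hy0.le) hle
      rw [ENNReal.toReal_mul, ENNReal.toReal_ofReal (by positivity)] at h2
      rw [hfy y]
      exact mul_le_mul_of_nonneg_left h2 (Real.sqrt_nonneg y)
  · -- upper bound
    intro a ha
    set ε : ℝ := (a - c)/4 with hεdef
    have hεpos : 0 < ε := div_pos (by linarith) (by norm_num)
    have hcε : 0 < c + ε := by linarith
    set δ : ℝ := min (1/2) ((a-c)/(8*(c+ε+1))) with hδdef
    have hδpos : 0 < δ := lt_min (by norm_num) (div_pos (by linarith) (by positivity))
    have hδhalf : δ ≤ 1/2 := min_le_left _ _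
    have hδ1 : δ < 1 := lt_of_le_of_lt hδhalf (by norm_num)
    have hδle : δ ≤ (a-c)/(8*(c+ε+1)) := min_le_right _ _
    -- threshold from h
    have hev := hH.eventually_lt_const (show c < c + ε by linarith)
    rw [eventually_nhdsWithin_iff, Metric.eventually_nhds_iff] at hev
    obtain ⟨r₁, hr₁pos, hr₁⟩ := hev
    have hDbound : ∀ r : ℝ, 0 < r → r < min r₁ 1 →
        Naux Λ r ≤ ENNReal.ofReal ((c+ε) / Real.sqrt (Real.log (1/r))) := by
      intro r h1 h2
      have h2a : r < r₁ := lt_of_lt_of_le h2 (min_le_left _ _)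
      have h2b : r < 1 := lt_of_lt_of_le h2 (min_le_right _ _)
      have hlog : 0 < Real.log (1/r) := Real.log_pos (by
        rw [one_div]
        exact (one_lt_inv_iff₀).2 ⟨h1, h2b⟩)
      have hless : Real.sqrt (Real.log (1/r)) * (Naux Λ r).toReal < c + ε := by
        apply hr₁ _ (mem_Ioi.2 h1)
        rw [Real.dist_eq, sub_zero, abs_of_pos h1]
        exact h2a
      have hfin := hNfin h2b.le
      rw [← ENNReal.ofReal_toReal hfin]
      apply ENNReal.ofReal_le_ofReal
      rw [le_div_iff₀ (Real.sqrt_pos.2 hlog)]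
      nlinarith [Real.sqrt_nonneg (Real.log (1/r)), ENNReal.toReal_nonneg (a := Naux Λ r)]
    -- limit function T
    have hT : Tendsto (fun y : ℝ => (Naux Λ 1).toReal * (Real.sqrt y * Real.exp (-(y/2)))
        + δ*(c+ε)*Real.sqrt 2 + (c+ε) * (Real.sqrt y / Real.sqrt (y + Real.log δ)))
        atTop (𝓝 ((Naux Λ 1).toReal * 0 + δ*(c+ε)*Real.sqrt 2 + (c+ε) * 1)) :=
      ((tendsto_const_nhds.mul taux_sqrt_exp).add tendsto_const_nhds).add
        (tendsto_const_nhds.mul (taux_sqrt_ratio (Real.log δ)))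
    have hsqrt2 : Real.sqrt 2 ≤ 2 := by
      nlinarith [Real.sq_sqrt (by norm_num : (0:ℝ) ≤ 2), Real.sqrt_nonneg 2]
    have hlim_lt : (Naux Λ 1).toReal * 0 + δ*(c+ε)*Real.sqrt 2 + (c+ε)*1 < a := by
      have h4 : δ*(c+ε)*Real.sqrt 2 ≤ δ*(c+ε+1)*2 := by
        apply mul_le_mul (by nlinarith) hsqrt2 (by positivity) (by positivity)
      have h5 : δ*(c+ε+1)*2 ≤ (a-c)/4 := by
        have := mul_le_mul_of_nonneg_right hδle (by positivity : (0:ℝ) ≤ (c+ε+1)*2)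
        calc δ*(c+ε+1)*2 = δ * ((c+ε+1)*2) := by ring
          _ ≤ (a-c)/(8*(c+ε+1)) * ((c+ε+1)*2) := this
          _ = (a-c)/4 := by field_simp; ring
      have hε4 : c + ε = c + (a-c)/4 := rfl
      nlinarith [ENNReal.toReal_nonneg (a := Naux Λ 1)]
    have hevT := hT.eventually_lt_const hlim_lt
    -- eventual smallness conditions
    have hmin3 : 0 < min δ (min r₁ 1) := lt_min hδpos (lt_min hr₁pos one_pos)
    have hexp2 : Tendsto (fun y : ℝ => Real.exp (-(y/2))) atTop (𝓝 0) := by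
      exact Real.tendsto_exp_neg_atTop_nhds_zero.comp (tendsto_id.atTop_div_const two_pos)
    have hevα := hexp2.eventually_lt_const hmin3
    have hexp3 : Tendsto (fun y : ℝ => (Real.exp y * δ)⁻¹) atTop (𝓝 0) := by
      have h1 := Real.tendsto_exp_neg_atTop_nhds_zero.const_mul δ⁻¹
      rw [mul_zero] at h1
      apply h1.congr
      intro y
      rw [mul_inv, Real.exp_neg]
      ring
    have hevtδ := hexp3.eventually_lt_const (lt_min hr₁pos one_pos)
    filter_upwards [hevT, hevα, hevtδ, eventually_gt_atTop (-(Real.log δ)),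
      eventually_ge_atTop (1:ℝ)] with y hT' hα' htδ' hlog' hy1
    have hy0 : 0 < y := lt_of_lt_of_le one_pos hy1
    have ht1 : 1 ≤ Real.exp y := Real.one_le_exp hy0.le
    set α : ℝ := Real.exp (-(y/2)) with hαdef
    have hα0 : 0 < α := Real.exp_pos _
    have hαδ : α < δ := lt_of_lt_of_le hα' (min_le_left _ _)
    have hαr : α < min r₁ 1 := lt_of_lt_of_le hα' (min_le_right _ _)
    have hylog : 0 < y + Real.log δ := by linarith
    -- chain
    have c1 : Laux Λ y ≤ ∫⁻ s in Ioo (0:ℝ) 1, Naux Λ (min 1 (Real.exp y*s)⁻¹) ∂volume :=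
      laux_tonelli Λ ht1
    have c2 := laux_split Λ (Real.exp_pos y) hα0 hαδ.le hδ1.le
    have e1 : (Real.exp y * α)⁻¹ = α := by
      rw [hαdef, ← Real.exp_add, show y + -(y/2) = y/2 by ring, ← Real.exp_neg]
    rw [e1] at c2
    have c3 : Naux Λ α ≤ ENNReal.ofReal ((c+ε)/Real.sqrt (y/2)) := by
      have := hDbound α hα0 hαr
      rwa [one_div, Real.log_inv, hαdef, Real.log_exp, neg_neg] at this
    have c4 : Naux Λ ((Real.exp y * δ)⁻¹) ≤
        ENNReal.ofReal ((c+ε)/Real.sqrt (y + Real.log δ)) := by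
      have := hDbound _ (by positivity) htδ'
      rwa [one_div, inv_inv, Real.log_mul (Real.exp_ne_zero y) hδpos.ne',
        Real.log_exp] at this
    have c5 : Naux Λ 1 * ENNReal.ofReal α
        = ENNReal.ofReal ((Naux Λ 1).toReal * α) := by
      rw [ENNReal.ofReal_mul ENNReal.toReal_nonneg, ENNReal.ofReal_toReal hN1]
    set A : ℝ := (Naux Λ 1).toReal * α + (c+ε)/Real.sqrt (y/2) * δ
        + (c+ε)/Real.sqrt (y + Real.log δ) with hAdef
    have hAterms : 0 ≤ (c+ε)/Real.sqrt (y/2) := by positivity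
    have c6 : Laux Λ y ≤ ENNReal.ofReal A := by
      refine le_trans c1 (le_trans c2 ?_)
      rw [hAdef, ENNReal.ofReal_add (by positivity) (by positivity),
        ENNReal.ofReal_add (by positivity) (by positivity)]
      refine add_le_add (add_le_add ?_ ?_) c4
      · exact le_of_eq c5
      · rw [ENNReal.ofReal_mul hAterms]
        exact mul_le_mul_left c3 _
    have c7 : (Laux Λ y).toReal ≤ A := ENNReal.toReal_le_of_le_ofReal (by positivity) c6
    have c8 : Real.sqrt y * A = (Naux Λ 1).toReal * (Real.sqrt y * α)
        + δ*(c+ε)*Real.sqrt 2 + (c+ε) * (Real.sqrt y / Real.sqrt (y + Real.log δ)) := by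
      have hs2 : Real.sqrt y = Real.sqrt 2 * Real.sqrt (y/2) := by
        rw [← Real.sqrt_mul (by norm_num : (0:ℝ) ≤ 2), show 2*(y/2) = y by ring]
      have hsy2 : 0 < Real.sqrt (y/2) := Real.sqrt_pos.2 (by linarith)
      rw [hAdef]
      rw [hs2]
      field_simp
    calc Real.sqrt y * f y = Real.sqrt y * (Laux Λ y).toReal := by rw [hfy y]
      _ ≤ Real.sqrt y * A := mul_le_mul_of_nonneg_left c7 (Real.sqrt_nonneg y)
      _ = _ := c8
      _ < a := hT'
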